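/- Let M ⊂ ℝ^d be compact, l > 0, and λ > 1. Then a compact connected set Σ ⊂ ℝ^d minimizes the penalized functional F_M(Σ') + λ·max(H^1(Σ') − l, 0) over all compact connected sets Σ' if and only if Σ is a maximal distance minimizer for (M, l); i.e. the penalized problem is equivalent to the maximal distance minimizer problem. -/

import Mathlib

open MeasureTheory Metric Set Filter EuclideanGeometry Asymptotics

noncomputable section

/-- Euclidean space ℝ^d. -/
abbrev Euc (d : ℕ) := EuclideanSpace ℝ (Fin d)

/-- The energy `F_M(S) = max_{y ∈ M} dist(y, S)`. -/
noncomputable def FM {d : ℕ} (M S : Set (Euc d)) : ℝ :=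
  sSup ((fun y => Metric.infDist y S) '' M)

/-- `S` is an `r`-minimizer for `M`: a compact connected set with `F_M(S) ≤ r`
of minimal one-dimensional Hausdorff measure among all such sets. -/
def IsRMinimizer {d : ℕ} (M : Set (Euc d)) (r : ℝ) (S : Set (Euc d)) : Prop :=
  IsCompact S ∧ IsConnected S ∧ FM M S ≤ r ∧
    ∀ S' : Set (Euc d), IsCompact S' → IsConnected S' → FM M S' ≤ r → μH[1] S ≤ μH[1] S'

/-- `S` is a maximal distance minimizer for `(M, l)`: a compact connected set of
one-dimensional Hausdorff measure at most `l` minimizing `F_M` among all such sets. -/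
def IsMDM {d : ℕ} (M : Set (Euc d)) (l : ℝ) (S : Set (Euc d)) : Prop :=
  IsCompact S ∧ IsConnected S ∧ μH[1] S ≤ ENNReal.ofReal l ∧
    ∀ S' : Set (Euc d), IsCompact S' → IsConnected S' → μH[1] S' ≤ ENNReal.ofReal l →
      FM M S ≤ FM M S'

/-- The `λ`-penalized functional `F_M(S) + λ·(H^1(S) − l)⁺` (valued in ℝ≥0∞,
with truncated subtraction playing the role of the positive part). -/
noncomputable def penalized {d : ℕ} (M : Set (Euc d)) (l lam : ℝ) (S : Set (Euc d)) :
    ENNReal :=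
  ENNReal.ofReal (FM M S) + ENNReal.ofReal lam * (μH[1] S - ENNReal.ofReal l)

lemma fm_bddAbove {d : ℕ} {M : Set (Euc d)} (hM : IsCompact M) (S : Set (Euc d)) :
    BddAbove ((fun y => Metric.infDist y S) '' M) :=
  (hM.image (Metric.continuous_infDist_pt S)).bddAbove

lemma fm_nonneg {d : ℕ} {M : Set (Euc d)} (hM : IsCompact M) (S : Set (Euc d)) :
    0 ≤ FM M S := by
  rcases M.eq_empty_or_nonempty with h | ⟨y, hy⟩
  · simp [FM, h, Real.sSup_empty]
  · exact le_trans Metric.infDist_nonneg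
      (le_csSup (fm_bddAbove hM S) ⟨y, hy, rfl⟩)

lemma fm_le_add {d : ℕ} {M : Set (Euc d)} (hM : IsCompact M) {S T : Set (Euc d)} {c : ℝ}
    (hc : 0 ≤ c) (h : ∀ y, Metric.infDist y T ≤ Metric.infDist y S + c) :
    FM M T ≤ FM M S + c := by
  rcases M.eq_empty_or_nonempty with hme | hMne
  · simp [FM, hme, Real.sSup_empty]; linarith
  · apply csSup_le (hMne.image _)
    rintro a ⟨y, hy, rfl⟩
    exact (h y).trans (add_le_add_left (le_csSup (fm_bddAbove hM S) ⟨y, hy, rfl⟩) c)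

lemma ofReal_dist_le_hausdorff {d : ℕ} {S : Set (Euc d)} (hS : IsPreconnected S)
    {x y : Euc d} (hx : x ∈ S) (hy : y ∈ S) :
    ENNReal.ofReal (dist x y) ≤ μH[1] S := by
  set f : Euc d → ℝ := fun z => dist z x with hf
  have hlip : LipschitzWith 1 f := LipschitzWith.dist_left x
  have himg : Set.Icc (0:ℝ) (dist y x) ⊆ f '' S := by
    have h0 : (0:ℝ) ∈ f '' S := ⟨x, hx, by simp [hf]⟩
    have h1 : dist y x ∈ f '' S := ⟨y, hy, rfl⟩
    exact (hS.image f hlip.continuous.continuousOn).Icc_subset h0 h1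
  calc ENNReal.ofReal (dist x y)
      = μH[1] (Set.Icc (0:ℝ) (dist y x)) := by
        rw [MeasureTheory.hausdorffMeasure_real, Real.volume_Icc, sub_zero, dist_comm]
    _ ≤ μH[1] (f '' S) := measure_mono himg
    _ ≤ ((1 : NNReal) : ENNReal) ^ (1:ℝ) * μH[1] S := hlip.hausdorffMeasure_image_le (by norm_num) S
    _ = μH[1] S := by simp

lemma scale_exists {d : ℕ} {S : Set (Euc d)} (hSc : IsCompact S) (hconn : IsConnected S)
    {l : ℝ} (hl : 0 < l) (hfin : μH[1] S ≠ ⊤) (hgt : ENNReal.ofReal l < μH[1] S) :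
    ∃ T : Set (Euc d), IsCompact T ∧ IsConnected T ∧ μH[1] T ≤ ENNReal.ofReal l ∧
      ∀ y, Metric.infDist y T ≤ Metric.infDist y S + ((μH[1] S).toReal - l) := by
  set L : ℝ := (μH[1] S).toReal with hL
  have hlL : l < L := by
    have := ENNReal.toReal_strict_mono hfin hgt
    rwa [ENNReal.toReal_ofReal hl.le] at this
  have hL0 : 0 < L := hl.trans hlL
  set θ : ℝ := l / L with hθ
  have hθ0 : 0 < θ := div_pos hl hL0
  have hθ1 : θ < 1 := (div_lt_one hL0).mpr hlL
  obtain ⟨p, hp⟩ := hconn.nonempty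
  set φ : Euc d → Euc d := fun z => p + θ • (z - p) with hφ
  have hφdist : ∀ a b : Euc d, dist (φ a) (φ b) = θ * dist a b := by
    intro a b
    have : φ a - φ b = θ • (a - b) := by
      simp only [hφ]; module
    rw [dist_eq_norm, this, norm_smul, Real.norm_eq_abs, abs_of_pos hθ0, ← dist_eq_norm]
  have hlip : LipschitzWith θ.toNNReal φ := by
    apply LipschitzWith.of_dist_le_mul
    intro a b
    rw [hφdist]
    gcongr
    exact le_of_eq (Real.coe_toNNReal θ hθ0.le).symm
  have hφcont : Continuous φ := by
    apply LipschitzWith.continuous hlip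
  refine ⟨φ '' S, hSc.image hφcont, hconn.image φ hφcont.continuousOn, ?_, ?_⟩
  · calc μH[1] (φ '' S) ≤ ((θ.toNNReal : ENNReal)) ^ (1:ℝ) * μH[1] S :=
          hlip.hausdorffMeasure_image_le (by norm_num) S
      _ = ENNReal.ofReal θ * ENNReal.ofReal L := by
          rw [ENNReal.rpow_one, ← ENNReal.ofReal_toReal hfin]
          rfl
      _ = ENNReal.ofReal (θ * L) := (ENNReal.ofReal_mul hθ0.le).symm
      _ = ENNReal.ofReal l := by rw [hθ, div_mul_cancel₀ _ hL0.ne']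
  · intro y
    obtain ⟨z, hz, hzd⟩ := hSc.exists_infDist_eq_dist hconn.nonempty y
    have h1 : Metric.infDist y (φ '' S) ≤ dist y (φ z) :=
      Metric.infDist_le_dist_of_mem (Set.mem_image_of_mem φ hz)
    have h2 : dist y (φ z) ≤ dist y z + dist z (φ z) := dist_triangle y z (φ z)
    have h3 : dist z (φ z) = (1 - θ) * dist z p := by
      have : z - φ z = (1 - θ) • (z - p) := by simp only [hφ]; module
      rw [dist_eq_norm, this, norm_smul, Real.norm_eq_abs,
        abs_of_pos (by linarith : (0:ℝ) < 1 - θ), ← dist_eq_norm]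
    have h4 : dist z p ≤ L := by
      have := ofReal_dist_le_hausdorff hconn.isPreconnected hz hp
      have h5 := ENNReal.toReal_mono hfin this
      rwa [ENNReal.toReal_ofReal dist_nonneg] at h5
    have h6 : (1 - θ) * dist z p ≤ (1 - θ) * L := by
      apply mul_le_mul_of_nonneg_left h4 (by linarith)
    have h7 : (1 - θ) * L = L - l := by
      rw [hθ, sub_mul, one_mul, div_mul_cancel₀ _ hL0.ne']
    rw [hzd]
    nlinarith [dist_nonneg (x := z) (y := p)]


/-- For `λ > 1` the penalized problem is equivalent to the maximal distance
minimizer problem. -/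
theorem penalized_equiv_mdm {d : ℕ} (M : Set (Euc d)) (hM : IsCompact M)
    (l lam : ℝ) (hl : 0 < l) (hlam : 1 < lam) (S : Set (Euc d))
    (hSc : IsCompact S) (hSconn : IsConnected S) :
    (∀ S' : Set (Euc d), IsCompact S' → IsConnected S' →
      penalized M l lam S ≤ penalized M l lam S') ↔ IsMDM M l S := by
  have hlam0 : ENNReal.ofReal lam ≠ 0 := by
    simp only [ne_eq, ENNReal.ofReal_eq_zero, not_le]; linarith
  constructor
  · intro h
    obtain ⟨p, hp⟩ := hSconn.nonempty
    have hfin : μH[1] S ≠ ⊤ := by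
      intro htop
      have hpen : penalized M l lam S = ⊤ := by
        unfold penalized
        rw [htop, ENNReal.top_sub ENNReal.ofReal_ne_top, ENNReal.mul_top hlam0,
          add_top _]
      have hsing := h {p} isCompact_singleton isConnected_singleton
      rw [hpen, top_le_iff] at hsing
      have hne : penalized M l lam {p} ≠ ⊤ := by
        unfold penalized
        haveI := MeasureTheory.Measure.noAtoms_hausdorff (Euc d) one_pos
        rw [measure_singleton, zero_tsub, mul_zero, add_zero]
        exact ENNReal.ofReal_ne_top
      exact hne hsing
    have hle : μH[1] S ≤ ENNReal.ofReal l := by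
      by_contra hgt
      push_neg at hgt
      obtain ⟨T, hTc, hTconn, hTm, hTd⟩ := scale_exists hSc hSconn hl hfin hgt
      have hlL : l < (μH[1] S).toReal := by
        have := ENNReal.toReal_strict_mono hfin hgt
        rwa [ENNReal.toReal_ofReal hl.le] at this
      set L : ℝ := (μH[1] S).toReal with hL
      have hFMT : FM M T ≤ FM M S + (L - l) := fm_le_add hM (by linarith) hTd
      have hpenT : penalized M l lam T ≤ ENNReal.ofReal (FM M S + (L - l)) := by
        unfold penalized
        rw [tsub_eq_zero_of_le hTm, mul_zero, add_zero]
        exact ENNReal.ofReal_le_ofReal hFMT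
      have hsub : μH[1] S - ENNReal.ofReal l = ENNReal.ofReal (L - l) := by
        rw [ENNReal.ofReal_sub _ hl.le, ENNReal.ofReal_toReal hfin]
      have hc := (h T hTc hTconn).trans hpenT
      unfold penalized at hc
      rw [hsub, ENNReal.ofReal_add (fm_nonneg hM S) (by linarith)] at hc
      have hc2 : ENNReal.ofReal lam * ENNReal.ofReal (L - l) ≤
          1 * ENNReal.ofReal (L - l) := by
        rw [one_mul]
        exact (ENNReal.add_le_add_iff_left ENNReal.ofReal_ne_top).mp hc
      have hne0 : ENNReal.ofReal (L - l) ≠ 0 := by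
        simp only [ne_eq, ENNReal.ofReal_eq_zero, not_le]; linarith
      have hlam1 : ENNReal.ofReal lam ≤ 1 :=
        (ENNReal.mul_le_mul_iff_left hne0 ENNReal.ofReal_ne_top).mp hc2
      rw [ENNReal.ofReal_le_one] at hlam1
      linarith
    refine ⟨hSc, hSconn, hle, ?_⟩
    intro S'' hc'' hconn'' hm''
    have hS := h S'' hc'' hconn''
    unfold penalized at hS
    rw [tsub_eq_zero_of_le hle, mul_zero, add_zero, tsub_eq_zero_of_le hm'',
      mul_zero, add_zero] at hS
    exact (ENNReal.ofReal_le_ofReal_iff (fm_nonneg hM S'')).mp hS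
  · rintro ⟨-, -, hle, hmin⟩ S' hc' hconn'
    have hpenS : penalized M l lam S = ENNReal.ofReal (FM M S) := by
      unfold penalized
      rw [tsub_eq_zero_of_le hle, mul_zero, add_zero]
    rcases eq_or_ne (μH[1] S') ⊤ with htop | hfin'
    · have : penalized M l lam S' = ⊤ := by
        unfold penalized
        rw [htop, ENNReal.top_sub ENNReal.ofReal_ne_top, ENNReal.mul_top hlam0,
          add_top _]
      rw [this]
      exact le_top
    rcases le_or_gt (μH[1] S') (ENNReal.ofReal l) with hle' | hgt'
    · have hm := hmin S' hc' hconn' hle'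
      rw [hpenS]
      exact le_trans (ENNReal.ofReal_le_ofReal hm) le_self_add
    · obtain ⟨T, hTc, hTconn, hTm, hTd⟩ := scale_exists hc' hconn' hl hfin' hgt'
      have hlL : l < (μH[1] S').toReal := by
        have := ENNReal.toReal_strict_mono hfin' hgt'
        rwa [ENNReal.toReal_ofReal hl.le] at this
      set L' : ℝ := (μH[1] S').toReal with hL'
      have h1 : FM M S ≤ FM M T := hmin T hTc hTconn hTm
      have h2 : FM M T ≤ FM M S' + (L' - l) := fm_le_add hM (by linarith) hTd
      have hsub : μH[1] S' - ENNReal.ofReal l = ENNReal.ofReal (L' - l) := by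
        rw [ENNReal.ofReal_sub _ hl.le, ENNReal.ofReal_toReal hfin']
      rw [hpenS]
      unfold penalized
      calc ENNReal.ofReal (FM M S) ≤ ENNReal.ofReal (FM M S' + (L' - l)) :=
            ENNReal.ofReal_le_ofReal (h1.trans h2)
        _ = ENNReal.ofReal (FM M S') + ENNReal.ofReal (L' - l) :=
            ENNReal.ofReal_add (fm_nonneg hM S') (by linarith)
        _ ≤ ENNReal.ofReal (FM M S') + ENNReal.ofReal lam * ENNReal.ofReal (L' - l) := by
            apply add_le_add_right
            calc ENNReal.ofReal (L' - l) = 1 * ENNReal.ofReal (L' - l) := (one_mul _).symm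
              _ ≤ ENNReal.ofReal lam * ENNReal.ofReal (L' - l) :=
                  mul_le_mul_left (ENNReal.one_le_ofReal.mpr hlam.le) _
        _ = ENNReal.ofReal (FM M S') + ENNReal.ofReal lam * (μH[1] S' - ENNReal.ofReal l) := by
            rw [hsub]


end
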